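/- If φ is any formula over τ that agrees with the ideal classifier on every τ-type (i.e., for all τ-types t, t ⊨ φ iff μ(t ∧ q) ≥ μ(t ∧ ¬q)), then err_μ(φ) = err_μ(φ_id^μ). Conversely, if err_μ(φ) = err_μ(φ_id^μ) and μ strictly ε-separates every τ-type for some ε > 0, then φ is logically equivalent to φ_id^μ. -/
import Mathlib


open scoped Classical
open Finset

inductive PropForm (α : Type) : Type where
  | var : α → PropForm α
  | fls : PropForm α
  | tru : PropForm α
  | neg : PropForm α → PropForm α
  | and : PropForm α → PropForm α → PropForm α
  | or  : PropForm α → PropForm α → PropForm α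

namespace PropForm
def eval {α : Type} (v : α → Bool) : PropForm α → Bool
  | var p => v p
  | fls => false
  | tru => true
  | neg φ => !(eval v φ)
  | and φ ψ => eval v φ && eval v ψ
  | or φ ψ => eval v φ || eval v ψ
end PropForm

/-- Disjunction of a finite family of formulas. -/
noncomputable def bigOr {α β : Type} (s : Finset β) (f : β → PropForm α) : PropForm α :=
  s.toList.foldr (fun b acc => PropForm.or (f b) acc) PropForm.fls

/-- The σ-type formula of a truth assignment `t`: the conjunction containing,
for each symbol `p`, the literal `p` if `t p = true` and `¬p` otherwise. -/
noncomputable def typeForm {α : Type} [Fintype α] (t : α → Bool) : PropForm α :=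
  (Finset.univ : Finset α).toList.foldr
    (fun p acc => PropForm.and (cond (t p) (PropForm.var p) (PropForm.neg (PropForm.var p))) acc)
    PropForm.tru

/-- True error of a formula w.r.t. a distribution `μ` on (τ ∪ {q})-types: the
probability that the formula disagrees with `q`. -/
noncomputable def errMu {τ : Type} [Fintype τ] [DecidableEq τ]
    (μ : (τ → Bool) → Bool → ℝ) (φ : PropForm τ) : ℝ :=
  ∑ t : τ → Bool, ∑ b : Bool, if φ.eval t ≠ b then μ t b else 0

/-- The ideal classifier: disjunction of all τ-types `t` with `μ(t∧q) ≥ μ(t∧¬q)`. -/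
noncomputable def idealClassifier {τ : Type} [Fintype τ] [DecidableEq τ]
    (μ : (τ → Bool) → Bool → ℝ) : PropForm τ :=
  bigOr (Finset.univ.filter fun t : τ → Bool => μ t false ≤ μ t true) typeForm

/-- A formula agreeing with the ideal classifier on every τ-type has the same
true error; conversely, if the errors agree and `μ` strictly ε-separates every
τ-type for some `ε > 0`, then the formula is logically equivalent to the ideal
classifier. -/
lemma bigOr_eval {α β : Type} (s : Finset β) (f : β → PropForm α) (v : α → Bool) :
    (bigOr s f).eval v = true ↔ ∃ b ∈ s, (f b).eval v = true := by
  unfold bigOr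
  have : ∀ l : List β, ((l.foldr (fun b acc => PropForm.or (f b) acc) PropForm.fls).eval v = true
      ↔ ∃ b ∈ l, (f b).eval v = true) := by
    intro l
    induction l with
    | nil => simp [PropForm.eval]
    | cons a l ih => simp [PropForm.eval, ih]
  rw [this]
  simp

lemma typeForm_eval {α : Type} [Fintype α] (t v : α → Bool) :
    (typeForm t).eval v = true ↔ v = t := by
  unfold typeForm
  have : ∀ l : List α, ((l.foldr
      (fun p acc => PropForm.and (cond (t p) (PropForm.var p) (PropForm.neg (PropForm.var p))) acc)
      PropForm.tru).eval v = true ↔ ∀ p ∈ l, v p = t p) := by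
    intro l
    induction l with
    | nil => simp [PropForm.eval]
    | cons a l ih =>
      simp only [List.foldr, PropForm.eval, Bool.and_eq_true, ih, List.mem_cons]
      constructor
      · rintro ⟨h1, h2⟩ p hp
        rcases hp with rfl | hp
        · cases hap : t p <;> simp [hap, PropForm.eval] at h1 <;> simp [h1, hap]
        · exact h2 p hp
      · intro h
        refine ⟨?_, fun p hp => h p (Or.inr hp)⟩
        have := h a (Or.inl rfl)
        cases hap : t a <;> simp [hap] at this <;> simp [PropForm.eval, this, hap]
  rw [this]
  constructor
  · intro h; funext p; exact h p (Finset.mem_toList.mpr (Finset.mem_univ p)) 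
  · rintro rfl p _; rfl

lemma idealClassifier_eval {τ : Type} [Fintype τ] [DecidableEq τ]
    (μ : (τ → Bool) → Bool → ℝ) (v : τ → Bool) :
    (idealClassifier μ).eval v = true ↔ μ v false ≤ μ v true := by
  unfold idealClassifier
  rw [bigOr_eval]
  constructor
  · rintro ⟨b, hb, hev⟩
    rw [typeForm_eval] at hev
    subst hev
    exact (Finset.mem_filter.mp hb).2
  · intro h
    exact ⟨v, Finset.mem_filter.mpr ⟨Finset.mem_univ v, h⟩, (typeForm_eval v v).mpr rfl⟩

lemma errMu_eq {τ : Type} [Fintype τ] [DecidableEq τ]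
    (μ : (τ → Bool) → Bool → ℝ) (φ : PropForm τ) :
    errMu μ φ = ∑ t : τ → Bool, if φ.eval t = true then μ t false else μ t true := by
  unfold errMu
  refine Finset.sum_congr rfl fun t _ => ?_
  rw [Fintype.sum_bool]
  cases h : φ.eval t <;> simp [h]

theorem stmt10 {τ : Type} [Fintype τ] [DecidableEq τ]
    (μ : (τ → Bool) → Bool → ℝ)
    (hnn : ∀ t b, 0 ≤ μ t b)
    (hpos : ∀ t : τ → Bool, 0 < μ t true + μ t false)
    (hsum : ∑ t : τ → Bool, ∑ b : Bool, μ t b = 1)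
    (φ : PropForm τ) :
    ((∀ t : τ → Bool, (φ.eval t = true ↔ μ t false ≤ μ t true)) →
      errMu μ φ = errMu μ (idealClassifier μ)) ∧
    (errMu μ φ = errMu μ (idealClassifier μ) →
      (∃ ε > (0 : ℝ), ∀ t : τ → Bool, ε ≤ |μ t true - μ t false|) →
      ∀ v : τ → Bool, φ.eval v = (idealClassifier μ).eval v) := by
  have hterm : ∀ t : τ → Bool,
      (if (idealClassifier μ).eval t = true then μ t false else μ t true)
        ≤ (if φ.eval t = true then μ t false else μ t true) := by
    intro t
    by_cases h : μ t false ≤ μ t true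
    · rw [if_pos ((idealClassifier_eval μ t).mpr h)]
      split
      · exact le_rfl
      · exact h
    · rw [if_neg (fun hh => h ((idealClassifier_eval μ t).mp hh))]
      split
      · exact le_of_not_ge h
      · exact le_rfl
  constructor
  · intro hag
    rw [errMu_eq, errMu_eq]
    refine Finset.sum_congr rfl fun t _ => ?_
    have : φ.eval t = (idealClassifier μ).eval t := by
      cases h : φ.eval t
      · symm; rw [Bool.eq_false_iff]; intro hc
        have := (idealClassifier_eval μ t).mp hc
        rw [← hag t] at this; rw [h] at this; exact Bool.false_ne_true this
      · symm; exact (idealClassifier_eval μ t).mpr ((hag t).mp h)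
    rw [this]
  · intro herr ⟨ε, hε, hsep⟩ v
    rw [errMu_eq, errMu_eq] at herr
    have hzero : ∀ t ∈ (Finset.univ : Finset (τ → Bool)),
        ((if φ.eval t = true then μ t false else μ t true)
          - (if (idealClassifier μ).eval t = true then μ t false else μ t true)) = 0 := by
      rw [← Finset.sum_eq_zero_iff_of_nonneg (fun t _ => sub_nonneg.mpr (hterm t))]
      rw [Finset.sum_sub_distrib, herr, sub_self]
    by_contra hne
    have h0 := hzero v (Finset.mem_univ v)
    have hsv := hsep v
    cases hφ : φ.eval v <;> cases hid : (idealClassifier μ).eval v <;>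
      simp [hφ, hid] at hne h0 ⊢
    · -- φ false, ideal true : μ v false ≤ μ v true, term φ = μ v true, ideal = μ v false
      have hle : μ v false ≤ μ v true := (idealClassifier_eval μ v).mp hid
      rw [abs_of_nonneg (sub_nonneg.mpr hle)] at hsv
      linarith
    · have hlt : ¬ μ v false ≤ μ v true := fun h => by
        have := (idealClassifier_eval μ v).mpr h; rw [hid] at this; exact Bool.false_ne_true this
      rw [abs_of_nonpos (by linarith [lt_of_not_ge hlt])] at hsv
      linarith [lt_of_not_ge hlt]
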